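/- arXiv:1302.5719 — 2 statements merged into one kernel-verified Lean document; each statement's English description precedes it below -/
import Mathlib

section
/- Let K be an unconditional convex body in R^n (n ≥ 2). If x ∈ K ∩ R^n_+, then the point with i-th coordinate 2·vol_{n-1}(K ∩ e_i^⊥)/(n·vol(K)) for each i belongs to the polar body K°. -/
open MeasureTheory
open Pointwise

noncomputable section

/-- The polar body of a set in `ℝⁿ`. -/
def polarBody {n : ℕ} (K : Set (EuclideanSpace ℝ (Fin n))) :
    Set (EuclideanSpace ℝ (Fin n)) :=
  {y | ∀ x ∈ K, inner ℝ x y ≤ (1 : ℝ)}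

/-- An unconditional convex body: compact, convex, nonempty interior, invariant
under all coordinate sign changes. -/
def IsUnconditionalBody {n : ℕ} (K : Set (EuclideanSpace ℝ (Fin n))) : Prop :=
  IsCompact K ∧ Convex ℝ K ∧ (interior K).Nonempty ∧
    ∀ x ∈ K, ∀ ε : Fin n → ℝ, (∀ i, ε i = 1 ∨ ε i = -1) →
      (WithLp.toLp 2 (fun i => ε i * x i) : EuclideanSpace ℝ (Fin n)) ∈ K

/-- The section of `K ⊂ ℝ^{n+1}` by the coordinate hyperplane `e_i^⊥`,
identified with a subset of `ℝ^n` by deleting the `i`-th coordinate. -/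
def coordSection {n : ℕ} (i : Fin (n + 1)) (K : Set (EuclideanSpace ℝ (Fin (n + 1)))) :
    Set (EuclideanSpace ℝ (Fin n)) :=
  (fun x : EuclideanSpace ℝ (Fin (n + 1)) =>
    (WithLp.toLp 2 (fun j => x (i.succAbove j)) : EuclideanSpace ℝ (Fin n))) '' {x | x ∈ K ∧ x i = 0}

-- sanity checks on defeq
example {m : ℕ} (k : Fin m) : Continuous fun x : EuclideanSpace ℝ (Fin m) => x k :=
  (continuous_apply k).comp (PiLp.continuous_ofLp 2 _)
example {m : ℕ} (i : Fin (m+1)) :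
    Continuous fun x : EuclideanSpace ℝ (Fin (m+1)) =>
      (WithLp.toLp 2 (fun j => x (i.succAbove j)) : EuclideanSpace ℝ (Fin m)) :=
  (PiLp.continuous_toLp 2 _).comp (continuous_pi fun j => (continuous_apply _).comp (PiLp.continuous_ofLp 2 _))

lemma vol_bridge {m : ℕ} (S : Set (EuclideanSpace ℝ (Fin m))) :
    volume (WithLp.toLp 2 ⁻¹' S) = volume S :=
  ((EuclideanSpace.volume_preserving_symm_measurableEquiv_toLp (Fin m)).symm.measure_preimage_emb
    (MeasurableEquiv.measurableEmbedding _) S)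

lemma meas_bridge {m : ℕ} {S : Set (EuclideanSpace ℝ (Fin m))} (h : MeasurableSet S) :
    MeasurableSet (WithLp.toLp 2 ⁻¹' S) :=
  (MeasurableEquiv.toLp 2 (Fin m → ℝ)).measurable h


lemma flip_mp {m : ℕ} {ε : Fin m → ℝ} (hε : ∀ i, ε i = 1 ∨ ε i = -1) :
    MeasurePreserving (fun x : Fin m → ℝ => fun i => ε i * x i) volume volume := by
  apply volume_preserving_pi
  intro i
  rcases hε i with h | h
  · rw [h]
    have : (HMul.hMul (1:ℝ)) = id := funext fun x => one_mul x
    rw [this]; exact MeasurePreserving.id _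
  · rw [h]
    have : (HMul.hMul (-1:ℝ)) = Neg.neg := funext fun x => neg_one_mul x
    rw [this]; exact Measure.measurePreserving_neg _

lemma coordzero_null {m : ℕ} (i : Fin m) : volume {x : Fin m → ℝ | x i = 0} = 0 := by
  classical
  have : {x : Fin m → ℝ | x i = 0} =
      Set.pi Set.univ (fun j => if j = i then ({0} : Set ℝ) else Set.univ) := by
    ext x
    simp only [Set.mem_setOf_eq, Set.mem_pi, Set.mem_univ, forall_true_left]
    constructor
    · intro h j; by_cases hj : j = i <;> simp [hj, h]
    · intro h; have := h i; simpa using this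
  rw [this, volume_pi_pi]
  exact Finset.prod_eq_zero (Finset.mem_univ i) (by simp)

lemma zeroset_null {m : ℕ} : volume {x : Fin m → ℝ | ∃ i, x i = 0} = 0 := by
  have : {x : Fin m → ℝ | ∃ i, x i = 0} = ⋃ i, {x | x i = 0} := by
    ext x; simp
  rw [this]
  exact measure_iUnion_null fun i => coordzero_null i

lemma vol_orthant {m : ℕ} (A : Set (Fin m → ℝ)) (hA : MeasurableSet A)
    (hu : ∀ x ∈ A, ∀ ε : Fin m → ℝ, (∀ i, ε i = 1 ∨ ε i = -1) → (fun i => ε i * x i) ∈ A) :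
    volume A = 2 ^ m * volume (A ∩ {x | ∀ i, 0 ≤ x i}) := by
  classical
  set sgn : (Fin m → Bool) → (Fin m → ℝ) := fun σ i => if σ i then 1 else -1 with hsgn
  have hsgn1 : ∀ σ i, sgn σ i = 1 ∨ sgn σ i = -1 := fun σ i => by
    by_cases h : σ i <;> simp [hsgn, h]
  have hsq : ∀ σ (i : Fin m), sgn σ i * sgn σ i = 1 := fun σ i => by
    rcases hsgn1 σ i with h | h <;> rw [h] <;> norm_num
  set Qo : (Fin m → Bool) → Set (Fin m → ℝ) := fun σ => {x | ∀ i, 0 < sgn σ i * x i} with hQo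
  have hQomeas : ∀ σ, MeasurableSet (Qo σ) := by
    intro σ
    have : Qo σ = ⋂ i, (fun x : Fin m → ℝ => sgn σ i * x i) ⁻¹' Set.Ioi 0 := by
      ext x; simp [hQo]
    rw [this]
    exact MeasurableSet.iInter fun i =>
      (measurable_const.mul (measurable_pi_apply i)) measurableSet_Ioi
  have hAflip : ∀ σ (x : Fin m → ℝ), ((fun i => sgn σ i * x i) ∈ A) ↔ x ∈ A := by
    intro σ x
    constructor
    · intro h
      have := hu _ h (sgn σ) (hsgn1 σ)
      have h2 : (fun i => sgn σ i * (sgn σ i * x i)) = x := by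
        funext i; rw [← mul_assoc, hsq, one_mul]
      rwa [h2] at this
    · intro h; exact hu _ h (sgn σ) (hsgn1 σ)
  have hpiece : ∀ σ, volume (A ∩ Qo σ) = volume (A ∩ Qo (fun _ => true)) := by
    intro σ
    have hmp := flip_mp (hsgn1 σ)
    have hpre : (fun x : Fin m → ℝ => fun i => sgn σ i * x i) ⁻¹' (A ∩ Qo σ)
        = A ∩ Qo (fun _ => true) := by
      ext x
      simp only [Set.mem_preimage, Set.mem_inter_iff, Set.mem_setOf_eq, hQo]
      rw [hAflip σ x]
      refine and_congr_right fun _ => ?_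
      constructor
      · intro h i
        have := h i
        rw [← mul_assoc, hsq, one_mul] at this
        simpa [hsgn] using this
      · intro h i
        rw [← mul_assoc, hsq, one_mul]
        simpa [hsgn] using h i
    rw [← hpre]
    exact (hmp.measure_preimage ((hA.inter (hQomeas σ)).nullMeasurableSet)).symm
  have hdisj : Pairwise (Function.onFun Disjoint fun σ => A ∩ Qo σ) := by
    intro σ τ hne
    rw [Function.onFun, Set.disjoint_left]
    rintro x ⟨-, hxσ⟩ ⟨-, hxτ⟩
    obtain ⟨i, hi⟩ : ∃ i, σ i ≠ τ i := by
      by_contra h; push_neg at h; exact hne (funext h)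
    have h1 := hxσ i
    have h2 := hxτ i
    rcases Bool.eq_false_or_eq_true (σ i) with h | h <;>
      rcases Bool.eq_false_or_eq_true (τ i) with h' | h' <;>
        simp [hsgn, h, h'] at h1 h2 hi <;> linarith
  have hunion : (⋃ σ, A ∩ Qo σ) = A \ {x | ∃ i, x i = 0} := by
    ext x
    simp only [Set.mem_iUnion, Set.mem_inter_iff, Set.mem_diff, Set.mem_setOf_eq, hQo]
    constructor
    · rintro ⟨σ, hxA, hx⟩
      refine ⟨hxA, ?_⟩
      rintro ⟨i, hi⟩
      have := hx i
      rw [hi, mul_zero] at this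
      exact lt_irrefl 0 this
    · rintro ⟨hxA, hx⟩
      push_neg at hx
      refine ⟨fun i => decide (0 < x i), hxA, fun i => ?_⟩
      by_cases h : 0 < x i
      · simp [hsgn, h]
      · have : x i < 0 := lt_of_le_of_ne (not_lt.1 h) (hx i)
        simp only [hsgn, h, decide_eq_true_eq, if_neg, decide_false]
        simp [h]
        linarith
  have hsum : volume (A \ {x | ∃ i, x i = 0}) = ∑ σ : Fin m → Bool, volume (A ∩ Qo σ) := by
    rw [← hunion, measure_iUnion hdisj fun σ => hA.inter (hQomeas σ), tsum_fintype]
  have hApos : volume (A ∩ Qo (fun _ => true)) = volume (A ∩ {x | ∀ i, 0 ≤ x i}) := by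
    apply le_antisymm
    · apply measure_mono
      refine Set.inter_subset_inter_right _ fun x hx i => le_of_lt ?_
      have := hx i
      simpa [hsgn] using this
    · have hsub : A ∩ {x | ∀ i, 0 ≤ x i} ⊆ (A ∩ Qo (fun _ => true)) ∪ {x | ∃ i, x i = 0} := by
        rintro x ⟨hxA, hx⟩
        by_cases h : ∃ i, x i = 0
        · exact Or.inr h
        · push_neg at h
          exact Or.inl ⟨hxA, fun i => by
            simp only [hsgn, if_pos rfl, one_mul]
            exact lt_of_le_of_ne (hx i) (Ne.symm (h i))⟩
      calc volume (A ∩ {x | ∀ i, 0 ≤ x i}) ≤ volume ((A ∩ Qo (fun _ => true)) ∪ {x | ∃ i, x i = 0}) :=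
            measure_mono hsub
        _ ≤ volume (A ∩ Qo (fun _ => true)) + volume {x : Fin m → ℝ | ∃ i, x i = 0} :=
            measure_union_le _ _
        _ = volume (A ∩ Qo (fun _ => true)) := by rw [zeroset_null, add_zero]
  calc volume A = volume (A \ {x | ∃ i, x i = 0}) := (measure_diff_null zeroset_null).symm
    _ = ∑ σ : Fin m → Bool, volume (A ∩ Qo σ) := hsum
    _ = ∑ _σ : Fin m → Bool, volume (A ∩ Qo (fun _ => true)) := by
        exact Finset.sum_congr rfl fun σ _ => hpiece σ
    _ = (Fintype.card (Fin m → Bool)) • volume (A ∩ Qo (fun _ => true)) := by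
        rw [Finset.sum_const, Finset.card_univ]
    _ = 2 ^ m * volume (A ∩ {x | ∀ i, 0 ≤ x i}) := by
        rw [hApos, nsmul_eq_mul]
        norm_num [Fintype.card_fun]


-- the 1-d integral
lemma lint_aux {m : ℕ} {c : ℝ} (hc : 0 < c) :
    (∫⁻ s in Set.Ioo 0 c, ENNReal.ofReal ((1 - s / c) ^ m)) = ENNReal.ofReal (c / (m + 1)) := by
  have hcont : Continuous fun s : ℝ => (1 - s / c) ^ m :=
    ((continuous_const.sub (continuous_id.div_const c)).pow m)
  have hint : IntegrableOn (fun s : ℝ => (1 - s / c) ^ m) (Set.Ioo 0 c) :=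
    (hcont.integrableOn_Icc (a := 0) (b := c)).mono_set Set.Ioo_subset_Icc_self
  have hnn : 0 ≤ᶠ[ae (volume.restrict (Set.Ioo 0 c))] fun s : ℝ => (1 - s / c) ^ m := by
    filter_upwards [ae_restrict_mem measurableSet_Ioo] with s hs
    have h : s / c < 1 := (div_lt_one hc).2 hs.2
    have h0 : (0:ℝ) ≤ 1 - s / c := by linarith
    exact pow_nonneg h0 m
  rw [← ofReal_integral_eq_lintegral_ofReal hint hnn]
  congr 1
  have h1 : (∫ s in Set.Ioo 0 c, (1 - s / c) ^ m) = ∫ s in (0)..c, (1 - s / c) ^ m := by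
    rw [intervalIntegral.integral_of_le hc.le, integral_Ioc_eq_integral_Ioo]
  rw [h1]
  have h2 := intervalIntegral.integral_comp_div (a := 0) (b := c) (c := c)
    (fun u : ℝ => (1 - u) ^ m) hc.ne'
  rw [h2, zero_div, div_self hc.ne']
  have h3 := intervalIntegral.integral_comp_sub_left (a := 0) (b := 1)
    (fun u : ℝ => u ^ m) 1
  rw [h3]
  norm_num [integral_pow]
  ring

lemma cone_vol {m : ℕ} (i : Fin (m + 1)) (z : Fin (m + 1) → ℝ) (hzi : 0 < z i)
    (F : Set (Fin (m + 1) → ℝ)) (hF0 : ∀ w ∈ F, w i = 0)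
    (C : Set (Fin (m + 1) → ℝ)) (hCmeas : MeasurableSet C)
    (hC : ∀ t ∈ Set.Icc (0:ℝ) 1, ∀ w ∈ F, (fun j => (1 - t) * w j + t * z j) ∈ C) :
    ENNReal.ofReal (z i / (m + 1)) *
      volume ((fun w : Fin (m + 1) → ℝ => fun j => w (i.succAbove j)) '' F) ≤ volume C := by
  classical
  set e := MeasurableEquiv.piFinSuccAbove (fun _ : Fin (m + 1) => ℝ) i with he
  have hmp := volume_preserving_piFinSuccAbove (fun _ : Fin (m + 1) => ℝ) i
  have himg : MeasurableSet (e '' C) := e.measurableSet_image.2 hCmeas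
  have hCvol : volume C = volume (e '' C) := by
    have h := hmp.measure_preimage himg.nullMeasurableSet
    rwa [Set.preimage_image_eq C e.injective] at h
  set F' := (fun w : Fin (m + 1) → ℝ => fun j => w (i.succAbove j)) '' F with hF'
  set zb : Fin m → ℝ := fun j => z (i.succAbove j) with hzb
  have hslice : ∀ s ∈ Set.Ioo 0 (z i),
      ENNReal.ofReal ((1 - s / z i) ^ m) * volume F' ≤ volume (Prod.mk s ⁻¹' (e '' C)) := by
    intro s hs
    set t := s / z i with htdef
    have ht0 : 0 < t := div_pos hs.1 hzi
    have ht1 : t < 1 := (div_lt_one hzi).2 hs.2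
    have hsub : (t • zb) +ᵥ ((1 - t) • F') ⊆ Prod.mk s ⁻¹' (e '' C) := by
      rintro v ⟨u, ⟨w', ⟨w, hwF, rfl⟩, rfl⟩, rfl⟩
      refine ⟨fun j => (1 - t) * w j + t * z j,
        hC t ⟨ht0.le, ht1.le⟩ w hwF, ?_⟩
      have h1 : (fun j => (1 - t) * w j + t * z j) i = s := by
        show (1 - t) * w i + t * z i = s
        rw [hF0 w hwF, mul_zero, zero_add, htdef, div_mul_cancel₀ _ hzi.ne']
      refine Prod.ext ?_ ?_
      · simpa [e, MeasurableEquiv.piFinSuccAbove_apply] using h1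
      · simp only [e, MeasurableEquiv.piFinSuccAbove_apply]
        funext j
        simp [Fin.insertNthEquiv, Fin.removeNth, hzb, smul_eq_mul, Pi.add_apply,
          Pi.smul_apply, vadd_eq_add]
        ring
    calc ENNReal.ofReal ((1 - s / z i) ^ m) * volume F'
        = volume ((t • zb) +ᵥ ((1 - t) • F')) := by
          rw [measure_vadd, Measure.addHaar_smul, Module.finrank_fin_fun,
            abs_of_nonneg (pow_nonneg (by linarith : (0:ℝ) ≤ 1 - t) m)]
      _ ≤ volume (Prod.mk s ⁻¹' (e '' C)) := measure_mono hsub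
  calc ENNReal.ofReal (z i / (m + 1)) * volume F'
      = (∫⁻ s in Set.Ioo 0 (z i), ENNReal.ofReal ((1 - s / z i) ^ m)) * volume F' := by
        rw [lint_aux hzi]
    _ = ∫⁻ s in Set.Ioo 0 (z i), ENNReal.ofReal ((1 - s / z i) ^ m) * volume F' := by
        rw [lintegral_mul_const]
        exact ((continuous_const.sub (continuous_id.div_const (z i))).pow m).measurable.ennreal_ofReal
    _ ≤ ∫⁻ s in Set.Ioo 0 (z i), volume (Prod.mk s ⁻¹' (e '' C)) := by
        refine lintegral_mono_ae ?_
        filter_upwards [ae_restrict_mem measurableSet_Ioo] with s hs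
        exact hslice s hs
    _ ≤ ∫⁻ s, volume (Prod.mk s ⁻¹' (e '' C)) := setLIntegral_le_lintegral _ _
    _ = volume (e '' C) := by
        rw [Measure.volume_eq_prod, Measure.prod_apply himg]
    _ = volume C := hCvol.symm


lemma main_ineq {n : ℕ} (K : Set (EuclideanSpace ℝ (Fin (n + 1)))) (hK : IsUnconditionalBody K)
    (z : EuclideanSpace ℝ (Fin (n + 1))) (hz : z ∈ K) (hz0 : ∀ i, 0 ≤ z i) :
    ∑ i, z i * (2 * (volume (coordSection i K)).toReal /
      ((n + 1) * (volume K).toReal)) ≤ 1 := by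
  classical
  obtain ⟨hKc, hKconv, hKint, hKunc⟩ := hK
  have hKmeas : MeasurableSet K := hKc.isClosed.measurableSet
  have hVpos : 0 < volume K := Measure.measure_pos_of_nonempty_interior _ hKint
  have hVfin : volume K < ⊤ := hKc.measure_lt_top
  set W : ENNReal := volume ((WithLp.toLp 2 ⁻¹' K) ∩ {x | ∀ k, 0 ≤ x k}) with hW
  have hKhalf : volume K = 2 ^ (n + 1) * W := by
    rw [← vol_bridge K]
    exact vol_orthant _ (meas_bridge hKmeas) (fun x hx ε hε => hKunc _ hx ε hε)
  -- sections are compact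
  have hsec_comp : ∀ i : Fin (n + 1), IsCompact (coordSection i K) := by
    intro i
    have h1 : IsCompact ({x | x ∈ K ∧ x i = 0} : Set (EuclideanSpace ℝ (Fin (n + 1)))) := by
      have h2 : ({x | x ∈ K ∧ x i = 0} : Set (EuclideanSpace ℝ (Fin (n + 1))))
          = K ∩ (fun x : EuclideanSpace ℝ (Fin (n + 1)) => x i) ⁻¹' {0} := rfl
      rw [h2]
      exact hKc.inter_right (isClosed_singleton.preimage ((continuous_apply i).comp (PiLp.continuous_ofLp 2 _)))
    exact h1.image ((PiLp.continuous_toLp 2 _).comp (continuous_pi fun j => (continuous_apply _).comp (PiLp.continuous_ofLp 2 _)))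
  -- sections are unconditional
  have hsec_unc : ∀ (i : Fin (n + 1)), ∀ y ∈ coordSection i K, ∀ ε : Fin n → ℝ,
      (∀ j, ε j = 1 ∨ ε j = -1) → WithLp.toLp 2 (fun j => ε j * y j) ∈ coordSection i K := by
    intro i y hy ε hε
    obtain ⟨x, ⟨hxK, hxi⟩, rfl⟩ := hy
    have hε' : ∀ k, (i.insertNth (1:ℝ) ε : Fin (n+1) → ℝ) k = 1 ∨ (i.insertNth (1:ℝ) ε : Fin (n+1) → ℝ) k = -1 := by
      intro k
      by_cases hk : k = i
      · subst hk; rw [Fin.insertNth_apply_same]; exact Or.inl rfl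
      · obtain ⟨j, rfl⟩ := Fin.exists_succAbove_eq hk
        simpa using hε j
    set ε' : Fin (n + 1) → ℝ := i.insertNth (1:ℝ) ε with hε'def
    refine ⟨WithLp.toLp 2 (fun k => ε' k * x k), ⟨hKunc x hxK _ hε', ?_⟩, ?_⟩
    · show ε' i * x i = 0
      rw [hxi, mul_zero]
    · ext j
      show ε' (i.succAbove j) * x (i.succAbove j) = _
      rw [hε'def, Fin.insertNth_apply_succAbove]
  -- orthant halving for sections
  have hsechalf : ∀ i : Fin (n + 1), volume (coordSection i K) =
      2 ^ n * volume ((WithLp.toLp 2 ⁻¹' coordSection i K) ∩ {y | ∀ j, 0 ≤ y j}) := by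
    intro i
    rw [← vol_bridge (coordSection i K)]
    exact vol_orthant _ (meas_bridge (hsec_comp i).isClosed.measurableSet)
      (fun y hy ε hε => hsec_unc i _ hy ε hε)
  -- nonnegative part of the section of K
  set F : Fin (n + 1) → Set (EuclideanSpace ℝ (Fin (n + 1))) :=
    fun i => {x | x ∈ K ∧ x i = 0 ∧ ∀ k, 0 ≤ x k} with hFdef
  have hFcomp : ∀ i, IsCompact (F i) := by
    intro i
    have h2 : F i = K ∩ ((fun x : EuclideanSpace ℝ (Fin (n + 1)) => x i) ⁻¹' {0}
        ∩ ⋂ k, (fun x : EuclideanSpace ℝ (Fin (n + 1)) => x k) ⁻¹' Set.Ici 0) := by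
      ext x
      exact ⟨fun h => ⟨h.1, h.2.1, Set.mem_iInter.2 h.2.2⟩,
        fun h => ⟨h.1, h.2.1, fun k => Set.mem_iInter.1 h.2.2 k⟩⟩
    rw [h2]
    exact hKc.inter_right (((isClosed_singleton.preimage ((continuous_apply i).comp (PiLp.continuous_ofLp 2 _)))).inter
      (isClosed_iInter fun k => isClosed_Ici.preimage ((continuous_apply k).comp (PiLp.continuous_ofLp 2 _))))
  have hF0 : ∀ i, ∀ w ∈ F i, w i = 0 := fun i w hw => hw.2.1
  -- projection of F i equals section ∩ orthant
  have hFproj : ∀ i : Fin (n + 1),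
      (fun w : Fin (n + 1) → ℝ => fun j => w (i.succAbove j)) ''
        (WithLp.toLp 2 ⁻¹' F i)
      = (WithLp.toLp 2 ⁻¹' coordSection i K) ∩ {y | ∀ j, 0 ≤ y j} := by
    intro i
    apply Set.Subset.antisymm
    · rintro y ⟨w, ⟨hwK, hwi, hwpos⟩, rfl⟩
      exact ⟨⟨WithLp.toLp 2 w, ⟨hwK, hwi⟩, rfl⟩, fun j => hwpos _⟩
    · rintro y ⟨⟨x, ⟨hxK, hxi⟩, hxy⟩, hypos⟩
      cases hxy
      refine ⟨fun k => |x k|, ⟨?_, ?_, fun k => abs_nonneg _⟩, ?_⟩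
      · have := hKunc x hxK (fun k => if x k < 0 then -1 else 1)
          (fun k => by by_cases h : x k < 0 <;> simp [h])
        have heq : (fun k => (if x k < 0 then (-1:ℝ) else 1) * x k) = fun k => |x k| := by
          funext k
          by_cases h : x k < 0
          · rw [if_pos h, abs_of_neg h]; ring
          · rw [if_neg h, abs_of_nonneg (not_lt.1 h), one_mul]
        rwa [heq] at this
      · show |x i| = 0
        rw [hxi, abs_zero]
      · funext j
        exact abs_of_nonneg (hypos j)
  -- the cones
  set C : Fin (n + 1) → Set (EuclideanSpace ℝ (Fin (n + 1))) :=
    fun i => (fun p : ℝ × EuclideanSpace ℝ (Fin (n + 1)) => (1 - p.1) • p.2 + p.1 • z) ''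
      (Set.Icc (0:ℝ) 1 ×ˢ F i) with hCdef
  have hCapp : ∀ (t : ℝ) (w : EuclideanSpace ℝ (Fin (n + 1))) (k),
      ((1 - t) • w + t • z) k = (1 - t) * w k + t * z k := by
    intro t w k
    simp [PiLp.add_apply, PiLp.smul_apply, smul_eq_mul]
  have hCcomp : ∀ i, IsCompact (C i) := by
    intro i
    exact (isCompact_Icc.prod (hFcomp i)).image
      (((continuous_const.sub continuous_fst).smul continuous_snd).add
        (continuous_fst.smul continuous_const))
  have hCmem : ∀ i, ∀ t ∈ Set.Icc (0:ℝ) 1, ∀ w ∈ F i,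
      WithLp.toLp 2 (fun k => (1 - t) * w k + t * z k) ∈ C i := by
    intro i t ht w hw
    exact ⟨(t, w), Set.mk_mem_prod ht hw, by ext k; exact hCapp t w k⟩
  have hCsub : ∀ i, C i ⊆ K ∩ {x : EuclideanSpace ℝ (Fin (n + 1)) | ∀ k, 0 ≤ x k} := by
    rintro i y ⟨⟨t, w⟩, ⟨ht, hw⟩, rfl⟩
    constructor
    · exact hKconv hw.1 hz (by linarith [ht.2]) ht.1 (by ring)
    · intro k
      show 0 ≤ ((1 - t) • w + t • z) k
      rw [hCapp]
      have h1 : 0 ≤ (1 - t) * w k := mul_nonneg (by linarith [ht.2]) (hw.2.2 k)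
      have h2 : 0 ≤ t * z k := mul_nonneg ht.1 (hz0 k)
      linarith
  have hCcoord : ∀ i, ∀ y ∈ C i, ∃ t ∈ Set.Icc (0:ℝ) 1,
      y i = t * z i ∧ ∀ k, t * z k ≤ y k := by
    rintro i y ⟨⟨t, w⟩, ⟨ht, hw⟩, rfl⟩
    refine ⟨t, ht, ?_, ?_⟩
    · show ((1 - t) • w + t • z) i = t * z i
      have hwi : w i = 0 := hw.2.1
      rw [hCapp, hwi]; ring
    · intro k
      show t * z k ≤ ((1 - t) • w + t • z) k
      rw [hCapp]
      have h1 : 0 ≤ (1 - t) * w k := mul_nonneg (by linarith [ht.2]) (hw.2.2 k)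
      linarith
  -- pairwise a.e. disjointness
  have hdisj : ∀ i j : Fin (n + 1), i ≠ j → 0 < z i → 0 < z j →
      volume (C i ∩ C j) = 0 := by
    intro i j hij hzi hzj
    set π : Fin (n + 1) → (EuclideanSpace ℝ (Fin (n + 1)) →ₗ[ℝ] ℝ) := fun k =>
      PiLp.projₗ 2 (𝕜 := ℝ) (β := fun _ : Fin (n + 1) => ℝ) k with hπ
    set f : EuclideanSpace ℝ (Fin (n + 1)) →ₗ[ℝ] ℝ := z j • π i - z i • π j with hf
    have hfapply : ∀ y : EuclideanSpace ℝ (Fin (n + 1)), f y = z j * y i - z i * y j := by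
      intro y; simp [hf, hπ]
    have hker : C i ∩ C j ⊆ (LinearMap.ker f : Submodule ℝ _) := by
      rintro y ⟨hyi, hyj⟩
      obtain ⟨t, ht, hti, htk⟩ := hCcoord i y hyi
      obtain ⟨s, hs, hsj, hsk⟩ := hCcoord j y hyj
      have h1 : t * z j ≤ s * z j := by
        have := htk j; rw [hsj] at this; linarith
      have h2 : s * z i ≤ t * z i := by
        have := hsk i; rw [hti] at this; linarith
      have hts : t = s := le_antisymm
        (le_of_mul_le_mul_right h1 hzj) (le_of_mul_le_mul_right h2 hzi)
      have : f y = 0 := by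
        rw [hfapply, hti, hsj, hts]; ring
      exact LinearMap.mem_ker.2 this
    have hne : LinearMap.ker f ≠ ⊤ := by
      intro htop
      have h1 : f (EuclideanSpace.single i 1) = 0 := by
        rw [LinearMap.ker_eq_top] at htop
        rw [htop]; rfl
      rw [hfapply] at h1
      rw [EuclideanSpace.single_apply, EuclideanSpace.single_apply] at h1
      simp [hij.symm] at h1
      exact absurd h1 hzj.ne'
    exact measure_mono_null hker (Measure.addHaar_submodule _ _ hne)
  -- cone volume lower bound
  have hconevol : ∀ i : Fin (n + 1), 0 < z i →
      ENNReal.ofReal (z i / (n + 1)) *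
        volume ((WithLp.toLp 2 ⁻¹' coordSection i K) ∩ {y | ∀ j, 0 ≤ y j})
        ≤ volume (C i) := by
    intro i hzi
    rw [← hFproj i, ← vol_bridge (C i)]
    exact cone_vol i z hzi _ (fun w hw => hF0 i _ hw) _
      (meas_bridge (hCcomp i).isClosed.measurableSet)
      (fun t ht w hw => hCmem i t ht _ hw)
  -- summation
  set I : Finset (Fin (n + 1)) := Finset.univ.filter (fun i => 0 < z i) with hIdef
  have hsum : ∑ i ∈ I, volume (C i) ≤ W := by
    have hpair : ((I : Set (Fin (n + 1))).Pairwise (Function.onFun (AEDisjoint volume) fun i => C i)) := by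
      intro i hi j hj hij
      have hzi : 0 < z i := by simpa [hIdef] using hi
      have hzj : 0 < z j := by simpa [hIdef] using hj
      exact hdisj i j hij hzi hzj
    rw [← measure_biUnion_finset₀ hpair
      (fun i _ => (hCcomp i).isClosed.measurableSet.nullMeasurableSet)]
    have hsub : (⋃ i ∈ I, C i) ⊆ K ∩ {x : EuclideanSpace ℝ (Fin (n + 1)) | ∀ k, 0 ≤ x k} :=
      Set.iUnion₂_subset fun i _ => hCsub i
    calc volume (⋃ i ∈ I, C i)
        ≤ volume (K ∩ {x : EuclideanSpace ℝ (Fin (n + 1)) | ∀ k, 0 ≤ x k}) := measure_mono hsub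
      _ = W := by rw [hW, ← vol_bridge]; rfl
  have hchain : ∑ i ∈ I, ENNReal.ofReal (z i / (n + 1)) *
      volume ((WithLp.toLp 2 ⁻¹' coordSection i K) ∩ {y | ∀ j, 0 ≤ y j}) ≤ W := by
    refine le_trans (Finset.sum_le_sum fun i hi => ?_) hsum
    exact hconevol i (by simpa [hIdef] using hi)
  -- pass to real numbers
  set v : Fin (n + 1) → ENNReal := fun i =>
    volume ((WithLp.toLp 2 ⁻¹' coordSection i K) ∩ {y | ∀ j, 0 ≤ y j}) with hv
  have hvfin : ∀ i, v i ≠ ⊤ := by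
    intro i
    have h1 : v i ≤ volume (WithLp.toLp 2 ⁻¹' coordSection i K) :=
      measure_mono Set.inter_subset_left
    rw [vol_bridge] at h1
    exact (lt_of_le_of_lt h1 (hsec_comp i).measure_lt_top).ne
  have hWfin : W ≠ ⊤ := by
    have h1 : W ≤ volume (WithLp.toLp 2 ⁻¹' K) :=
      measure_mono Set.inter_subset_left
    rw [vol_bridge] at h1
    exact (lt_of_le_of_lt h1 hVfin).ne
  have hreal : ∑ i ∈ I, (z i / (n + 1)) * (v i).toReal ≤ W.toReal := by
    have h1 := ENNReal.toReal_mono hWfin hchain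
    rw [ENNReal.toReal_sum (fun i _ => ENNReal.mul_ne_top ENNReal.ofReal_ne_top (hvfin i))] at h1
    refine le_trans (le_of_eq ?_) h1
    refine Finset.sum_congr rfl fun i _ => ?_
    rw [ENNReal.toReal_mul, ENNReal.toReal_ofReal
      (div_nonneg (hz0 i) (by positivity))]
  have hVR : (volume K).toReal = 2 ^ (n + 1) * W.toReal := by
    rw [hKhalf, ENNReal.toReal_mul]
    norm_num [ENNReal.toReal_pow]
  have hVRpos : 0 < (volume K).toReal := ENNReal.toReal_pos hVpos.ne' hVfin.ne
  have hWRpos : 0 < W.toReal := by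
    rcases lt_or_eq_of_le (ENNReal.toReal_nonneg (a := W)) with h | h
    · exact h
    · exfalso; rw [hVR, ← h, mul_zero] at hVRpos; exact lt_irrefl _ hVRpos
  have hsR : ∀ i, (volume (coordSection i K)).toReal = 2 ^ n * (v i).toReal := by
    intro i
    rw [hsechalf i, ENNReal.toReal_mul]
    norm_num [ENNReal.toReal_pow]
    rfl
  -- final computation
  have hzero : ∀ i ∈ Finset.univ, i ∉ I →
      z i * (2 * (volume (coordSection i K)).toReal / ((n + 1) * (volume K).toReal)) = 0 := by
    intro i _ hi
    have : z i = 0 := le_antisymm (by simpa [hIdef] using hi) (hz0 i)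
    rw [this, zero_mul]
  rw [← Finset.sum_subset (Finset.subset_univ I) hzero]
  have hterm : ∀ i ∈ I, z i * (2 * (volume (coordSection i K)).toReal /
      ((n + 1) * (volume K).toReal)) = ((z i / (n + 1)) * (v i).toReal) / W.toReal := by
    intro i _
    rw [hsR i, hVR]
    have hn1 : (0:ℝ) < (n : ℝ) + 1 := by positivity
    field_simp
    ring
  rw [Finset.sum_congr rfl hterm, ← Finset.sum_div]
  rw [div_le_one hWRpos]
  exact hreal

theorem section_point_mem_polar {n : ℕ} (hn : 1 ≤ n)
    (K : Set (EuclideanSpace ℝ (Fin (n + 1)))) (hK : IsUnconditionalBody K)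
    (x : EuclideanSpace ℝ (Fin (n + 1))) (hx : x ∈ K) (hx0 : ∀ i, 0 ≤ x i) :
    (WithLp.toLp 2 (fun i => 2 * (volume (coordSection i K)).toReal /
        ((n + 1) * (volume K).toReal)) : EuclideanSpace ℝ (Fin (n + 1))) ∈ polarBody K := by
  simp only [polarBody, Set.mem_setOf_eq]
  intro y hy
  set p : EuclideanSpace ℝ (Fin (n + 1)) := WithLp.toLp 2 (fun i => 2 * (volume (coordSection i K)).toReal /
      ((n + 1) * (volume K).toReal)) with hp
  have hpnn : ∀ i, 0 ≤ p i := fun i => by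
    rw [hp]
    show 0 ≤ 2 * (volume (coordSection i K)).toReal / ((n + 1) * (volume K).toReal)
    positivity
  set za : EuclideanSpace ℝ (Fin (n + 1)) := WithLp.toLp 2 (fun i => |y i|) with hza
  have hzaK : za ∈ K := by
    have h1 := hK.2.2.2 y hy (fun i => if y i < 0 then -1 else 1)
      (fun i => by by_cases h : y i < 0 <;> simp [h])
    have heq : WithLp.toLp 2 (fun i => (if y i < 0 then (-1:ℝ) else 1) * y i) = za := by
      ext i
      show (if y i < 0 then (-1:ℝ) else 1) * y i = |y i|
      by_cases h : y i < 0
      · rw [if_pos h, abs_of_neg h]; ring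
      · rw [if_neg h, abs_of_nonneg (not_lt.1 h), one_mul]
    rwa [heq] at h1
  have hmain := main_ineq K hK za hzaK (fun i => abs_nonneg _)
  have hinner : (inner ℝ y p : ℝ) = ∑ i, y i * p i := by
    simp [PiLp.inner_apply, RCLike.inner_apply, mul_comm]
  rw [hinner]
  calc ∑ i, y i * p i ≤ ∑ i, za i * p i := by
        refine Finset.sum_le_sum fun i _ => ?_
        refine mul_le_mul_of_nonneg_right ?_ (hpnn i)
        exact le_abs_self _
    _ ≤ 1 := by simpa [hp] using hmain
end
end

section
/- Let n ≥ 2 and let K ⊂ B_∞^n be a convex body such that K ∩ e_j^⊥ = B_∞^n ∩ e_j^⊥ for all j = 1,…,n. Then the hyperplane piece {x ∈ B_∞^n : x_1+⋯+x_n = n-1} is contained in K, and consequently if p = (t,…,t) ∈ ∂K with t ≥ 0, then t ≥ (n-1)/n. -/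
open MeasureTheory ENNReal

noncomputable section

/-- The unit cube `B_∞^n = [-1,1]^n`. -/
def unitCube (n : ℕ) : Set (EuclideanSpace ℝ (Fin n)) :=
  {x | ∀ i, |x i| ≤ 1}

theorem slab_subset_and_diagonal_bound {n : ℕ} (hn : 2 ≤ n)
    (K : Set (EuclideanSpace ℝ (Fin n)))
    (hbody : IsCompact K ∧ Convex ℝ K ∧ (interior K).Nonempty)
    (hKsub : K ⊆ unitCube n)
    (hsect : ∀ j : Fin n, {x | x ∈ K ∧ x j = 0} = {x | x ∈ unitCube n ∧ x j = 0}) :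
    {x | x ∈ unitCube n ∧ ∑ i, x i = (n : ℝ) - 1} ⊆ K ∧
      ∀ t : ℝ, 0 ≤ t →
        (WithLp.toLp 2 (fun _ => t) : EuclideanSpace ℝ (Fin n)) ∈ frontier K →
        ((n : ℝ) - 1) / n ≤ t := by
  obtain ⟨hK_cpt, hK_conv, -⟩ := hbody
  have hn0 : (0:ℝ) < n := by positivity
  -- helper: any point of the cube with some coordinate zero lies in K
  have hmemK : ∀ (v : EuclideanSpace ℝ (Fin n)) (j : Fin n),
      (∀ i, |v i| ≤ 1) → v j = 0 → v ∈ K := by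
    intro v j hv hvj
    have : v ∈ {x : EuclideanSpace ℝ (Fin n) | x ∈ unitCube n ∧ x j = 0} := ⟨hv, hvj⟩
    rw [← hsect j] at this
    exact this.1
  -- Part 1 : the slab is in K
  have hslab : {x : EuclideanSpace ℝ (Fin n) | x ∈ unitCube n ∧ ∑ i, x i = (n : ℝ) - 1} ⊆ K := by
    intro x hx
    obtain ⟨hcube, hsum⟩ := hx
    -- y j : all ones except 0 in coordinate j
    set y : Fin n → EuclideanSpace ℝ (Fin n) := fun j => WithLp.toLp 2 (fun i => if i = j then 0 else 1) with hy
    have hyK : ∀ j, y j ∈ K := by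
      intro j
      refine hmemK (y j) j ?_ ?_
      · intro i
        simp only [hy, PiLp.toLp_apply]
        split <;> norm_num
      · simp [hy]
    have hw : ∀ j, (0:ℝ) ≤ 1 - x j := fun j => by
      have := (abs_le.mp (hcube j)).2; linarith
    have hwsum : ∑ j, (1 - x j) = 1 := by
      rw [Finset.sum_sub_distrib]
      simp [hsum]
    have := hK_conv.sum_mem (t := Finset.univ) (w := fun j => 1 - x j) (z := y)
      (fun j _ => hw j) hwsum (fun j _ => hyK j)
    convert this using 1
    ext i
    have : (∑ j, (1 - x j) • y j) i = ∑ j, (1 - x j) * (if i = j then 0 else 1) := by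
      rw [WithLp.ofLp_sum, Finset.sum_apply]
      rfl
    rw [this]
    have : ∑ j, (1 - x j) * (if i = j then 0 else 1)
        = ∑ j, ((1 - x j) - if i = j then (1 - x j) else 0) := by
      apply Finset.sum_congr rfl
      intro j _
      split <;> ring_nf <;> simp_all
    rw [this, Finset.sum_sub_distrib, hwsum, Finset.sum_ite_eq Finset.univ i (fun j => 1 - x j)]
    simp
  refine ⟨hslab, ?_⟩
  -- 0 is an interior point of K : the ball of radius 1/n is in K
  have hball : Metric.ball (0 : EuclideanSpace ℝ (Fin n)) (1/n) ⊆ K := by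
    intro z hz
    have hnorm : ‖z‖ < 1/n := by simpa using hz
    have hcoord : ∀ j, |z j| ≤ 1/n := by
      intro j
      refine le_trans ?_ hnorm.le
      have h1 : |z j| = Real.sqrt ((z j)^2) := by
        rw [Real.sqrt_sq_eq_abs]
      have h2 : ‖z‖ = Real.sqrt (∑ i, (z i)^2) := by
        rw [EuclideanSpace.norm_eq]
        congr 1
        apply Finset.sum_congr rfl
        intro i _
        rw [Real.norm_eq_abs, sq_abs]
      rw [h1, h2]
      apply Real.sqrt_le_sqrt
      exact Finset.single_le_sum (f := fun i => (z i)^2) (fun i _ => sq_nonneg _) (Finset.mem_univ j)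
    set v : Fin n → EuclideanSpace ℝ (Fin n) := fun j => WithLp.toLp 2 (fun i => if i = j then n * z j else 0)
      with hv
    have hvK : ∀ j, j ∈ Finset.univ → v j ∈ K := by
      intro j _
      have : Nontrivial (Fin n) := Fin.nontrivial_iff_two_le.mpr hn
      obtain ⟨k, hk⟩ := exists_ne j
      refine hmemK (v j) k ?_ ?_
      · intro i
        simp only [hv, PiLp.toLp_apply]
        split
        · rw [abs_mul, abs_of_nonneg hn0.le]
          calc (n:ℝ) * |z j| ≤ n * (1/n) := by
                exact mul_le_mul_of_nonneg_left (hcoord j) hn0.le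
            _ = 1 := by field_simp
        · norm_num
      · simp [hv, hk]
    have := hK_conv.sum_mem (t := Finset.univ) (w := fun _ => (1:ℝ)/n)
      (z := v) (fun j _ => by positivity) (by
        rw [Finset.sum_const]
        simp
        field_simp) hvK
    convert this using 1
    ext i
    have h1 : (∑ j, ((1:ℝ)/n) • v j) i = ∑ j, ((1:ℝ)/n) * (if i = j then n * z j else 0) := by
      rw [WithLp.ofLp_sum, Finset.sum_apply]; rfl
    rw [h1]
    have h2 : ∀ j, ((1:ℝ)/n) * (if i = j then n * z j else 0)
        = if i = j then z j else 0 := by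
      intro j
      split
      · field_simp
      · ring
    simp_rw [h2]
    rw [Finset.sum_ite_eq Finset.univ i (fun j => z j)]
    simp
  have h0int : (0 : EuclideanSpace ℝ (Fin n)) ∈ interior K := by
    rw [mem_interior]
    exact ⟨Metric.ball 0 (1/n), hball, Metric.isOpen_ball, Metric.mem_ball_self (by positivity)⟩
  -- the diagonal point with sum n-1 is in K
  have hq : (WithLp.toLp 2 (fun _ => ((n:ℝ)-1)/n) : EuclideanSpace ℝ (Fin n)) ∈ K := by
    apply hslab
    constructor
    · intro i
      rw [abs_of_nonneg]
      · rw [div_le_one hn0]; linarith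
      · apply div_nonneg _ hn0.le
        have : (2:ℝ) ≤ n := by exact_mod_cast hn
        linarith
    · rw [Finset.sum_const]
      simp
      field_simp
  intro t ht hfr
  by_contra hlt
  push_neg at hlt
  have hn1 : (0:ℝ) < (n:ℝ) - 1 := by
    have : (2:ℝ) ≤ n := by exact_mod_cast hn
    linarith
  have hpnotint : (WithLp.toLp 2 (fun _ => t) : EuclideanSpace ℝ (Fin n)) ∉ interior K := hfr.2
  apply hpnotint
  rcases eq_or_lt_of_le ht with h0 | h0
  · have : (WithLp.toLp 2 (fun _ => t) : EuclideanSpace ℝ (Fin n)) = 0 := by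
      ext i; simp [← h0]
    rw [this]; exact h0int
  · -- p is in the open segment from 0 to q
    have hseg : (WithLp.toLp 2 (fun _ => t) : EuclideanSpace ℝ (Fin n)) ∈
        openSegment ℝ (0 : EuclideanSpace ℝ (Fin n))
          (WithLp.toLp 2 (fun _ => ((n:ℝ)-1)/n) : EuclideanSpace ℝ (Fin n)) := by
      set s : ℝ := t * n / ((n:ℝ) - 1) with hs
      have hs0 : 0 < s := by positivity
      have hs1 : s < 1 := by
        rw [hs, div_lt_one hn1]
        calc t * n < (((n:ℝ)-1)/n) * n := by
              exact mul_lt_mul_of_pos_right hlt hn0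
          _ = (n:ℝ) - 1 := by field_simp
      refine ⟨1 - s, s, by linarith, hs0, by ring, ?_⟩
      ext i
      show (1 - s) * 0 + s * (((n:ℝ)-1)/n) = t
      rw [hs]
      field_simp
      ring
    exact hK_conv.openSegment_interior_self_subset_interior h0int hq hseg
end
end
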